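/- arXiv:2301.00660 — 4 statements merged into one kernel-verified Lean document; each statement's English description precedes it below -/
import Mathlib

section
/- Let (X, c) be a Čech closure space, (Y, d) a topological closure space, and f : X → Y a set map. Then f : (X, c) → (Y, d) is continuous if and only if f : (X, τ(c)) → (Y, d) is continuous, where τ(c) is the topological modification of c. -/
theorem continuous_iff_topological_modification {X Y : Type*}
    (c : Set X → Set X)
    (hc1 : c ∅ = ∅) (hc2 : ∀ A : Set X, A ⊆ c A)
    (hc3 : ∀ A B : Set X, c (A ∪ B) = c A ∪ c B)
    (d : Set Y → Set Y)
    (hd1 : d ∅ = ∅) (hd2 : ∀ B : Set Y, B ⊆ d B)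
    (hd3 : ∀ A B : Set Y, d (A ∪ B) = d A ∪ d B)
    (hd4 : ∀ B : Set Y, d (d B) = d B)
    (t : Set X → Set X)
    (ht : ∀ A : Set X, t A = ⋂₀ {F : Set X | c F = F ∧ A ⊆ F})
    (f : X → Y) :
    (∀ A : Set X, f '' c A ⊆ d (f '' A)) ↔ (∀ A : Set X, f '' t A ⊆ d (f '' A)) := by
  have cmono : ∀ A B : Set X, A ⊆ B → c A ⊆ c B := by
    intro A B hAB
    have : A ∪ B = B := Set.union_eq_self_of_subset_left hAB
    have h := hc3 A B
    rw [this] at h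
    rw [h]; exact Set.subset_union_left
  have dmono : ∀ A B : Set Y, A ⊆ B → d A ⊆ d B := by
    intro A B hAB
    have : A ∪ B = B := Set.union_eq_self_of_subset_left hAB
    have h := hd3 A B
    rw [this] at h
    rw [h]; exact Set.subset_union_left
  constructor
  · intro h A
    set F : Set X := f ⁻¹' (d (f '' A)) with hF
    have hAF : A ⊆ F := fun x hx => hd2 _ (Set.mem_image_of_mem f hx)
    have hcF : c F = F := by
      apply Set.Subset.antisymm _ (hc2 F)
      intro x hx
      have h1 : f x ∈ d (f '' F) := h F (Set.mem_image_of_mem f hx)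
      have h2 : f '' F ⊆ d (f '' A) := Set.image_preimage_subset f _
      have := dmono _ _ h2 h1
      rw [hd4] at this
      exact this
    have : t A ⊆ F := by
      rw [ht]
      exact Set.sInter_subset_of_mem ⟨hcF, hAF⟩
    intro y hy
    obtain ⟨x, hx, rfl⟩ := hy
    exact this hx
  · intro h A
    have hsub : c A ⊆ t A := by
      rw [ht]
      intro x hx
      intro F hFmem
      obtain ⟨hFc, hAF⟩ := hFmem
      have := cmono A F hAF hx
      rwa [hFc] at this
    exact (Set.image_mono (f := f) hsub).trans (h A)
end

section
/- Let (X, c) be a compact topological space, (Y, d) a closure space with an interior cover 𝒱 (every point of Y has a member of 𝒱 as a neighborhood), and f : (X, c) → (Y, d) continuous. Then there exists a finite open cover 𝒰 of X such that for every U ∈ 𝒰 there exists V ∈ 𝒱 with f(U) ⊆ V. -/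
theorem compact_refinement_of_interior_cover {X Y : Type*}
    [TopologicalSpace X] [CompactSpace X]
    (d : Set Y → Set Y)
    (hd1 : d ∅ = ∅) (hd2 : ∀ B : Set Y, B ⊆ d B)
    (hd3 : ∀ A B : Set Y, d (A ∪ B) = d A ∪ d B)
    (V : Set (Set Y)) (hV : ∀ y : Y, ∃ W ∈ V, y ∉ d Wᶜ)
    (f : X → Y)
    (hf : ∀ A : Set X, f '' closure A ⊆ d (f '' A)) :
    ∃ U : Finset (Set X), (∀ O ∈ U, IsOpen O) ∧ ⋃₀ (U : Set (Set X)) = Set.univ ∧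
      ∀ O ∈ U, ∃ W ∈ V, f '' O ⊆ W := by
  have dmono : ∀ A B : Set Y, A ⊆ B → d A ⊆ d B := by
    intro A B hAB
    have : A ∪ B = B := Set.union_eq_self_of_subset_left hAB
    calc d A ⊆ d A ∪ d B := Set.subset_union_left
      _ = d (A ∪ B) := (hd3 A B).symm
      _ = d B := by rw [this]
  choose W hWV hWn using fun x => hV (f x)
  set O : X → Set X := fun x => (closure (f ⁻¹' (W x)ᶜ))ᶜ with hO
  have hOopen : ∀ x, IsOpen (O x) := fun x => isClosed_closure.isOpen_compl
  have hxO : ∀ x, x ∈ O x := by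
    intro x hx
    exact hWn x (dmono _ _ (Set.image_preimage_subset f _)
      (hf (f ⁻¹' (W x)ᶜ) ⟨x, hx, rfl⟩))
  have hOsub : ∀ x, f '' O x ⊆ W x := by
    rintro x y ⟨z, hz, rfl⟩
    by_contra h
    exact hz (subset_closure (by simpa using h))
  obtain ⟨t, ht⟩ := isCompact_univ.elim_finite_subcover O hOopen
    (fun x _ => Set.mem_iUnion.2 ⟨x, hxO x⟩)
  classical
  refine ⟨t.image O, ?_, ?_, ?_⟩
  · intro o ho
    obtain ⟨x, -, rfl⟩ := Finset.mem_image.1 ho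
    exact hOopen x
  · apply Set.eq_univ_of_univ_subset
    intro x hx
    obtain ⟨i, hi, hxi⟩ := Set.mem_iUnion₂.1 (ht hx)
    exact ⟨O i, by simpa using Finset.mem_image_of_mem O hi, hxi⟩
  · intro o ho
    obtain ⟨x, -, rfl⟩ := Finset.mem_image.1 ho
    exact ⟨W x, hWV x, hOsub x⟩
end

section
/- Pasting lemma for closure spaces: let (X, c) be a closure space with a locally finite closed cover {U_α}, and let f : (X, c) → (Y, d) be a set map such that each restriction f|_{U_α} (with the subspace closure) is continuous. Then f is continuous. -/
theorem cech_pasting_lemma {X Y ι : Type*}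
    (c : Set X → Set X)
    (h1 : c ∅ = ∅) (h2 : ∀ A : Set X, A ⊆ c A)
    (h3 : ∀ A B : Set X, c (A ∪ B) = c A ∪ c B)
    (d : Set Y → Set Y)
    (hd1 : d ∅ = ∅) (hd2 : ∀ B : Set Y, B ⊆ d B)
    (hd3 : ∀ A B : Set Y, d (A ∪ B) = d A ∪ d B)
    (U : ι → Set X)
    (hcover : ⋃ i, U i = Set.univ)
    (hclosed : ∀ i, c (U i) = U i)
    (hlf : ∀ x : X, ∃ B : Set X, x ∉ c Bᶜ ∧ {i : ι | (U i ∩ B).Nonempty}.Finite)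
    (f : X → Y)
    (hres : ∀ i, ∀ S : Set X, S ⊆ U i → f '' (U i ∩ c S) ⊆ d (f '' S)) :
    ∀ A : Set X, f '' c A ⊆ d (f '' A) := by
  have cmono : ∀ {A B : Set X}, A ⊆ B → c A ⊆ c B := by
    intro A B hAB
    have : A ∪ B = B := Set.union_eq_self_of_subset_left hAB
    calc c A ⊆ c A ∪ c B := Set.subset_union_left
      _ = c (A ∪ B) := (h3 A B).symm
      _ = c B := by rw [this]
  have dmono : ∀ {A B : Set Y}, A ⊆ B → d A ⊆ d B := by
    intro A B hAB
    have : A ∪ B = B := Set.union_eq_self_of_subset_left hAB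
    calc d A ⊆ d A ∪ d B := Set.subset_union_left
      _ = d (A ∪ B) := (hd3 A B).symm
      _ = d B := by rw [this]
  -- finite union
  have cfin : ∀ (S : ι → Set X) (F : Set ι), F.Finite →
      c (⋃ i ∈ F, S i) ⊆ ⋃ i ∈ F, c (S i) := by
    intro S F hF
    refine Set.Finite.induction_on (motive := fun F _ => c (⋃ i ∈ F, S i) ⊆ ⋃ i ∈ F, c (S i)) F hF ?_ ?_
    · simp [h1]
    · intro a F ha hFf ih
      rw [Set.biUnion_insert, h3, Set.biUnion_insert]
      exact Set.union_subset_union_right _ ih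
  intro A y hy
  obtain ⟨x, hx, rfl⟩ := hy
  obtain ⟨B, hxB, hfin⟩ := hlf x
  -- x ∈ c (A ∩ B)
  have hsub : A ⊆ (A ∩ B) ∪ Bᶜ := by
    intro a haA
    by_cases h : a ∈ B
    · exact Or.inl ⟨haA, h⟩
    · exact Or.inr h
  have hx1 : x ∈ c (A ∩ B) := by
    have := cmono hsub hx
    rw [h3] at this
    rcases this with h | h
    · exact h
    · exact absurd h hxB
  -- A ∩ B ⊆ ⋃ i ∈ F, U i ∩ (A ∩ B)
  set F := {i : ι | (U i ∩ B).Nonempty} with hFdef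
  have hsub2 : A ∩ B ⊆ ⋃ i ∈ F, U i ∩ (A ∩ B) := by
    intro a ha
    have : a ∈ ⋃ i, U i := by rw [hcover]; trivial
    obtain ⟨i, hi⟩ := Set.mem_iUnion.mp this
    exact Set.mem_biUnion ⟨a, hi, ha.2⟩ ⟨hi, ha⟩
  have hx2 : x ∈ ⋃ i ∈ F, c (U i ∩ (A ∩ B)) :=
    cfin _ F hfin (cmono hsub2 hx1)
  obtain ⟨i, _, hxi⟩ := Set.mem_iUnion₂.mp hx2
  have hSU : U i ∩ (A ∩ B) ⊆ U i := Set.inter_subset_left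
  have hxU : x ∈ U i := by
    have := cmono hSU hxi
    rwa [hclosed i] at this
  have : f x ∈ d (f '' (U i ∩ (A ∩ B))) :=
    hres i _ hSU ⟨x, ⟨hxU, hxi⟩, rfl⟩
  exact dmono (Set.image_mono (fun a ha => ha.2.1)) this
end

section
/- For n, m ≥ 1 the discrete interval (J_n, c_m) is contractible, where J_n = {0, 1, …, n} carries the subspace closure induced from (ℤ, c_m) with c_m(i) = {j ∈ ℤ : |i − j| ≤ m}. -/
open Set

/-- `U` is a neighborhood of `x` in the closure space `(X, c)`. -/
def Nbhd {X : Type*} (c : Set X → Set X) (x : X) (U : Set X) : Prop := x ∉ c Uᶜ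

/-- The product closure of two closure operators. -/
def ProdCl {X Y : Type*} (c : Set X → Set X) (d : Set Y → Set Y) :
    Set (X × Y) → Set (X × Y) :=
  fun M => {p | ∀ U V, Nbhd c p.1 U → Nbhd d p.2 V → ((U ×ˢ V) ∩ M).Nonempty}

/-- The topological closure operator on the unit interval `[0,1]`. -/
def IntCl : Set unitInterval → Set unitInterval := fun A => closure A

/-- Continuity of a map of closure spaces. -/
def ContMap {X Y : Type*} (c : Set X → Set X) (d : Set Y → Set Y) (f : X → Y) : Prop :=
  ∀ A : Set X, f '' c A ⊆ d (f '' A)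

/-- Homotopy of maps of closure spaces. -/
def HomotopicMaps {X Y : Type*} (c : Set X → Set X) (d : Set Y → Set Y)
    (f g : X → Y) : Prop :=
  ∃ H : X × unitInterval → Y, ContMap (ProdCl c IntCl) d H ∧
    (∀ x, H (x, 0) = f x) ∧ (∀ x, H (x, 1) = g x)

/-- A closure space is contractible if its identity map is homotopic to a constant map. -/
def ContractibleCl {X : Type*} (c : Set X → Set X) : Prop :=
  ∃ x₀ : X, HomotopicMaps c c id (fun _ => x₀)

/-- The `m`-nearest-neighbors closure operator on `ℤ`. -/
def ZCl (m : ℕ) : Set ℤ → Set ℤ := fun A => {j | ∃ i ∈ A, |i - j| ≤ (m : ℤ)}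


noncomputable def phiCap (n : ℕ) (t : unitInterval) : ℤ := ⌈(n : ℝ) * (1 - (t : ℝ))⌉

lemma phiCap_nonneg (n : ℕ) (t : unitInterval) : 0 ≤ phiCap n t := by
  apply Int.ceil_nonneg
  have h1 : (t : ℝ) ≤ 1 := t.2.2
  have : (0:ℝ) ≤ (n:ℝ) := by positivity
  nlinarith

lemma phiCap_zero (n : ℕ) : phiCap n 0 = n := by
  simp [phiCap]

lemma phiCap_one (n : ℕ) : phiCap n 1 = 0 := by
  simp [phiCap]

lemma phiCap_close (n : ℕ) (s t : unitInterval)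
    (h : |(s : ℝ) - (t : ℝ)| < 1 / ((n : ℝ) + 1)) :
    |phiCap n s - phiCap n t| ≤ 1 := by
  have hab : |(n : ℝ) * (1 - (s : ℝ)) - (n : ℝ) * (1 - (t : ℝ))| ≤ 1 := by
    have : (n : ℝ) * (1 - (s : ℝ)) - (n : ℝ) * (1 - (t : ℝ)) = (n : ℝ) * ((t:ℝ) - (s:ℝ)) := by ring
    rw [this, abs_mul, abs_of_nonneg (by positivity : (0:ℝ) ≤ (n:ℝ))]
    have h' : |(t:ℝ) - (s:ℝ)| < 1 / ((n:ℝ)+1) := by rwa [abs_sub_comm]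
    have hn1 : (0:ℝ) < (n:ℝ) + 1 := by positivity
    have h2 : (n:ℝ) * |(t:ℝ) - (s:ℝ)| ≤ (n:ℝ) * (1/((n:ℝ)+1)) :=
      mul_le_mul_of_nonneg_left (le_of_lt h') (by positivity)
    have h3 : (n:ℝ) * (1/((n:ℝ)+1)) ≤ 1 := by
      rw [mul_one_div, div_le_one hn1]; linarith
    linarith
  rw [abs_le] at hab ⊢
  constructor
  · have := Int.ceil_le_ceil (R := ℝ) (by linarith [hab.2] : (n : ℝ) * (1 - (t : ℝ)) ≤ (n : ℝ) * (1 - (s : ℝ)) + 1)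
    rw [Int.ceil_add_one] at this
    unfold phiCap; omega
  · have := Int.ceil_le_ceil (R := ℝ) (by linarith [hab.1] : (n : ℝ) * (1 - (s : ℝ)) ≤ (n : ℝ) * (1 - (t : ℝ)) + 1)
    rw [Int.ceil_add_one] at this
    unfold phiCap; omega

lemma min_close (x y c d m : ℤ) (h1 : |x - y| ≤ m) (h2 : |c - d| ≤ m) :
    |min x c - min y d| ≤ m := by
  rw [abs_le] at *
  omega

theorem discrete_interval_contractible (n m : ℕ) (hn : 1 ≤ n) (hm : 1 ≤ m) :
    ContractibleCl (fun B : Set {i : ℤ // 0 ≤ i ∧ i ≤ (n : ℤ)} =>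
      Subtype.val ⁻¹' (ZCl m (Subtype.val '' B))) := by
  classical
  refine ⟨⟨0, le_refl 0, by exact_mod_cast Nat.zero_le n⟩, ?_⟩
  refine ⟨fun p => ⟨min p.1.val (phiCap n p.2),
      ⟨le_min p.1.2.1 (phiCap_nonneg n p.2), le_trans (min_le_left _ _) p.1.2.2⟩⟩,
    ?_, ?_, ?_⟩
  · -- continuity
    intro A z hz
    obtain ⟨⟨x, t⟩, hp, rfl⟩ := hz
    -- use neighborhoods
    set U : Set {i : ℤ // 0 ≤ i ∧ i ≤ (n : ℤ)} := {y | |y.val - x.val| ≤ (m : ℤ)} with hU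
    set V : Set unitInterval := Metric.ball t (1 / ((n : ℝ) + 1)) with hV
    have hUnb : Nbhd (fun B : Set {i : ℤ // 0 ≤ i ∧ i ≤ (n : ℤ)} =>
        Subtype.val ⁻¹' (ZCl m (Subtype.val '' B))) x U := by
      intro hx
      simp only [mem_preimage, ZCl, mem_setOf_eq] at hx
      obtain ⟨i, ⟨y, hy, rfl⟩, hle⟩ := hx
      exact hy hle
    have hVnb : Nbhd IntCl t V := by
      intro ht
      have hop : IsOpen V := Metric.isOpen_ball
      rw [show IntCl Vᶜ = Vᶜ from hop.isClosed_compl.closure_eq] at ht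
      exact ht (Metric.mem_ball_self (by positivity))
    obtain ⟨⟨y, s⟩, hmem, hA⟩ := hp U V hUnb hVnb
    rw [mem_prod] at hmem
    refine ⟨min y.val (phiCap n s), ⟨_, ⟨⟨y, s⟩, hA, rfl⟩, rfl⟩, ?_⟩
    have h1 : |y.val - x.val| ≤ (m : ℤ) := hmem.1
    have h2 : |phiCap n s - phiCap n t| ≤ 1 := by
      apply phiCap_close
      have := hmem.2
      rw [hV, Metric.mem_ball, Subtype.dist_eq, Real.dist_eq] at this
      exact this
    exact min_close _ _ _ _ _ h1 (le_trans h2 (by exact_mod_cast hm))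
  · intro x
    simp only [id]
    ext
    simp only
    rw [phiCap_zero]
    exact min_eq_left x.2.2
  · intro x
    ext
    simp only
    rw [phiCap_one]
    exact min_eq_right x.2.1
end
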